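/- If A and B are n×n Hermitian matrices and f : ℝ → ℝ has total variation at most 1, then |∫ f dμ_A − ∫ f dμ_B| ≤ rank(A−B)/n. -/

import Mathlib

open Matrix Finset Module

variable {n : ℕ}

section Spectral
variable {M : Matrix (Fin n) (Fin n) ℂ} (hM : M.IsHermitian)

lemma aux_toEuclideanLin_eigen (j : Fin n) :
    Matrix.toEuclideanLin M (hM.eigenvectorBasis j) =
      (hM.eigenvalues j : ℂ) • hM.eigenvectorBasis j := by
  apply (WithLp.equiv 2 (Fin n → ℂ)).injective
  rw [show ∀ x, WithLp.equiv 2 (Fin n → ℂ) (Matrix.toEuclideanLin M x) = M *ᵥ WithLp.equiv 2 _ x from fun _ => rfl]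
  have h := hM.mulVec_eigenvectorBasis j
  rw [show WithLp.equiv 2 (Fin n → ℂ) (hM.eigenvectorBasis j) = ⇑(hM.eigenvectorBasis j) from rfl, h]
  ext i
  simp [Complex.real_smul]

lemma aux_repr_toEuclideanLin (v : EuclideanSpace ℂ (Fin n)) (j : Fin n) :
    hM.eigenvectorBasis.repr (Matrix.toEuclideanLin M v) j =
      (hM.eigenvalues j : ℂ) * hM.eigenvectorBasis.repr v j := by
  rw [OrthonormalBasis.repr_apply_apply, OrthonormalBasis.repr_apply_apply,
    ← (Matrix.isHermitian_iff_isSymmetric.1 hM) (hM.eigenvectorBasis j) v,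
    aux_toEuclideanLin_eigen hM j, inner_smul_left]
  simp

lemma aux_qform (v : EuclideanSpace ℂ (Fin n)) :
    RCLike.re (inner ℂ v (Matrix.toEuclideanLin M v) : ℂ) =
      ∑ i, hM.eigenvalues i * ‖hM.eigenvectorBasis.repr v i‖ ^ 2 := by
  rw [← hM.eigenvectorBasis.repr.inner_map_map v (Matrix.toEuclideanLin M v)]
  rw [PiLp.inner_apply]
  rw [map_sum]
  refine Finset.sum_congr rfl fun i _ => ?_
  rw [aux_repr_toEuclideanLin hM v i]
  simp only [RCLike.inner_apply]
  rw [mul_assoc, RCLike.mul_conj]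
  simp [RCLike.mul_re, ← Complex.ofReal_pow]

lemma aux_normsq (v : EuclideanSpace ℂ (Fin n)) :
    ‖v‖ ^ 2 = ∑ i, ‖hM.eigenvectorBasis.repr v i‖ ^ 2 := by
  rw [← hM.eigenvectorBasis.repr.norm_map v, EuclideanSpace.norm_eq,
    Real.sq_sqrt (by positivity)]

end Spectral

lemma aux_finrank_span {ι : Type*} [Fintype ι] {V : Type*} [AddCommGroup V] [Module ℂ V]
    (b : Basis ι ℂ V) (s : Finset ι) :
    Module.finrank ℂ (Submodule.span ℂ (⇑b '' ↑s)) = s.card := by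
  rw [Set.image_eq_range]
  have h : LinearIndependent ℂ (fun x : ↥(↑s : Set ι) => b ↑x) :=
    b.linearIndependent.comp _ Subtype.val_injective
  rw [finrank_span_eq_card h]; simp

lemma aux_counting (A B C : Matrix (Fin n) (Fin n) ℂ)
    (hA : A.IsHermitian) (hB : B.IsHermitian)
    (hC : ∀ v : EuclideanSpace ℂ (Fin n), Matrix.toEuclideanLin C v = 0 →
      Matrix.toEuclideanLin A v = Matrix.toEuclideanLin B v) (t : ℝ) :
    (univ.filter (fun i => hA.eigenvalues i ≤ t)).card ≤
      (univ.filter (fun i => hB.eigenvalues i ≤ t)).card + C.rank := by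
  classical
  set sA : Finset (Fin n) := univ.filter (fun i => hA.eigenvalues i ≤ t) with hsA
  set sB : Finset (Fin n) := univ.filter (fun i => ¬ hB.eigenvalues i ≤ t) with hsB
  set S : Submodule ℂ (EuclideanSpace ℂ (Fin n)) :=
    Submodule.span ℂ (⇑hA.eigenvectorBasis.toBasis '' ↑sA) with hS
  set T : Submodule ℂ (EuclideanSpace ℂ (Fin n)) :=
    Submodule.span ℂ (⇑hB.eigenvectorBasis.toBasis '' ↑sB) with hT
  have hdimS : Module.finrank ℂ S = sA.card := aux_finrank_span _ _
  have hdimT : Module.finrank ℂ T = sB.card := aux_finrank_span _ _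
  have hmemS : ∀ v ∈ S, ∀ i, i ∉ sA → hA.eigenvectorBasis.repr v i = 0 := by
    intro v hv i hi
    have hsupp := (Basis.mem_span_image _).1 hv
    have h2 : hA.eigenvectorBasis.toBasis.repr v i = 0 := by
      by_contra h
      exact hi (by exact_mod_cast hsupp (Finsupp.mem_support_iff.2 h))
    rwa [OrthonormalBasis.coe_toBasis_repr_apply] at h2
  have hmemT : ∀ v ∈ T, ∀ i, i ∉ sB → hB.eigenvectorBasis.repr v i = 0 := by
    intro v hv i hi
    have hsupp := (Basis.mem_span_image _).1 hv
    have h2 : hB.eigenvectorBasis.toBasis.repr v i = 0 := by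
      by_contra h
      exact hi (by exact_mod_cast hsupp (Finsupp.mem_support_iff.2 h))
    rwa [OrthonormalBasis.coe_toBasis_repr_apply] at h2
  have hSq : ∀ v ∈ S, RCLike.re (inner ℂ v (Matrix.toEuclideanLin A v) : ℂ) ≤ t * ‖v‖ ^ 2 := by
    intro v hv
    rw [aux_qform hA, aux_normsq hA v, Finset.mul_sum]
    refine Finset.sum_le_sum fun i _ => ?_
    by_cases hi : i ∈ sA
    · have hle : hA.eigenvalues i ≤ t := (Finset.mem_filter.1 hi).2
      nlinarith [sq_nonneg ‖hA.eigenvectorBasis.repr v i‖]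
    · rw [hmemS v hv i hi]; simp
  have hTq : ∀ v ∈ T, v ≠ 0 →
      t * ‖v‖ ^ 2 < RCLike.re (inner ℂ v (Matrix.toEuclideanLin B v) : ℂ) := by
    intro v hv hv0
    rw [aux_qform hB, aux_normsq hB v, Finset.mul_sum]
    have hex : ∃ i0, hB.eigenvectorBasis.repr v i0 ≠ 0 := by
      by_contra h
      push_neg at h
      apply hv0
      have hz : hB.eigenvectorBasis.repr v = 0 := by
        apply PiLp.ext; intro i; exact h i
      rwa [LinearIsometryEquiv.map_eq_zero_iff] at hz
    obtain ⟨i0, hi0⟩ := hex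
    have hi0mem : i0 ∈ sB := by
      by_contra h; exact hi0 (hmemT v hv i0 h)
    refine Finset.sum_lt_sum (fun i _ => ?_) ⟨i0, Finset.mem_univ i0, ?_⟩
    · by_cases hi : i ∈ sB
      · have hlt : t < hB.eigenvalues i := lt_of_not_ge (Finset.mem_filter.1 hi).2
        nlinarith [sq_nonneg ‖hB.eigenvectorBasis.repr v i‖]
      · rw [hmemT v hv i hi]; simp
    · have h1 : t < hB.eigenvalues i0 := lt_of_not_ge (Finset.mem_filter.1 hi0mem).2
      have h2 : 0 < ‖hB.eigenvectorBasis.repr v i0‖ ^ 2 := pow_pos (norm_pos_iff.mpr hi0) 2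
      nlinarith
  have hST : ∀ v, v ∈ S ⊓ T → v ≠ 0 → Matrix.toEuclideanLin C v ≠ 0 := by
    intro v hv hv0 hCv
    have hAB := hC v hCv
    have h1 := hSq v hv.1
    have h2 := hTq v hv.2 hv0
    rw [hAB] at h1
    linarith
  have hrank : C.rank = Module.finrank ℂ (LinearMap.range (Matrix.toEuclideanLin C)) := by
    rw [Matrix.rank_eq_finrank_range_toLin C (PiLp.basisFun 2 ℂ (Fin n))
      (PiLp.basisFun 2 ℂ (Fin n))]
    rfl
  have hinf : Module.finrank ℂ ↥(S ⊓ T) ≤ C.rank := by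
    set L := (Matrix.toEuclideanLin C).domRestrict (S ⊓ T) with hL
    have hinj : Function.Injective L := by
      rw [← LinearMap.ker_eq_bot, LinearMap.ker_eq_bot']
      rintro ⟨v, hv⟩ hLv
      have : Matrix.toEuclideanLin C v = 0 := hLv
      by_contra hne
      exact hST v hv (fun h => hne (by simp [h])) this
    calc Module.finrank ℂ ↥(S ⊓ T)
        = Module.finrank ℂ (LinearMap.range L) := (LinearMap.finrank_range_of_inj hinj).symm
      _ ≤ Module.finrank ℂ (LinearMap.range (Matrix.toEuclideanLin C)) := by
          apply Submodule.finrank_mono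
          rintro x ⟨v, rfl⟩
          exact ⟨v, rfl⟩
      _ = C.rank := hrank.symm
  have hsum := Submodule.finrank_sup_add_finrank_inf_eq S T
  have hsup : Module.finrank ℂ ↥(S ⊔ T) ≤ n := by
    have h := Submodule.finrank_le (S ⊔ T)
    rwa [finrank_euclideanSpace, Fintype.card_fin] at h
  have hpart : (univ.filter (fun i => hB.eigenvalues i ≤ t)).card + sB.card = n := by
    have h := Finset.card_filter_add_card_filter_not
      (s := (univ : Finset (Fin n))) (p := fun i => hB.eigenvalues i ≤ t)
    simpa [hsB] using h
  omega

lemma aux_abel {n : ℕ} (a b : Fin n → ℝ) (r : ℕ) (φ : ℝ → ℝ)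
    (hφ : ∀ (m : ℕ) (t : Fin (m + 1) → ℝ), StrictMono t →
      ∑ i : Fin m, |φ (t i.succ) - φ (t i.castSucc)| ≤ 1)
    (hc : ∀ t : ℝ, |((univ.filter (fun i => a i ≤ t)).card : ℝ) -
        ((univ.filter (fun i => b i ≤ t)).card : ℝ)| ≤ r) :
    |∑ i, φ (a i) - ∑ i, φ (b i)| ≤ r := by
  classical
  rcases Nat.eq_zero_or_pos n with hn | hn
  · subst hn; simp
  set s : Finset ℝ := (univ.image a) ∪ (univ.image b) with hs
  have hsne : s.Nonempty := ⟨a ⟨0, hn⟩, by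
    simp only [hs, Finset.mem_union, Finset.mem_image]
    exact Or.inl ⟨⟨0, hn⟩, Finset.mem_univ _, rfl⟩⟩
  set m := s.card with hm
  have hm1 : 1 ≤ m := Finset.card_pos.2 hsne
  set e := s.orderIsoOfFin rfl with he
  set c : ℕ → ℝ := fun j => if h : j < m then (e ⟨j, h⟩ : ℝ) else 0 with hcdef
  have hcval : ∀ (j : ℕ) (h : j < m), c j = e ⟨j, h⟩ := fun j h => by simp [hcdef, h]
  have hclt : ∀ {j k : ℕ}, j < k → k < m → c j < c k := by
    intro j k hjk hk
    rw [hcval j (hjk.trans hk), hcval k hk]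
    exact_mod_cast e.strictMono (show (⟨j, hjk.trans hk⟩ : Fin m) < ⟨k, hk⟩ from
      Fin.mk_lt_mk.2 hjk)
  have hcle : ∀ {j k : ℕ}, j ≤ k → k < m → c j ≤ c k := by
    intro j k hjk hk
    rcases eq_or_lt_of_le hjk with rfl | h
    · exact le_rfl
    · exact (hclt h hk).le
  have hcmem : ∀ (j : ℕ) (h : j < m), c j ∈ s := fun j h => by
    rw [hcval j h]; exact (e ⟨j, h⟩).2
  have hsurj : ∀ x ∈ s, ∃ j : Fin m, (e j : ℝ) = x := by
    intro x hx
    obtain ⟨j, hj⟩ := e.surjective ⟨x, hx⟩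
    exact ⟨j, by rw [hj]⟩
  -- grouping identity
  have hgroup : ∀ (g : Fin n → ℝ), (∀ i, g i ∈ s) →
      ∑ i, φ (g i) = ∑ j ∈ range m, ((univ.filter (fun i => g i = c j)).card : ℝ) * φ (c j) := by
    intro g hg
    have h1 : ∑ i, φ (g i) = ∑ x ∈ s, ∑ i ∈ univ.filter (fun i => g i = x), φ x :=
      (Finset.sum_fiberwise_of_maps_to' (fun i _ => hg i) φ).symm
    rw [h1]
    have h2 : ∑ x ∈ s, ∑ i ∈ univ.filter (fun i => g i = x), φ x
        = ∑ j ∈ range m, ∑ i ∈ univ.filter (fun i => g i = c j), φ (c j) := by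
      refine (Finset.sum_bij' (i := fun (j : ℕ) (hj : j ∈ range m) => c j)
        (j := fun (x : ℝ) (hx : x ∈ s) => ((e.symm ⟨x, hx⟩ : Fin m) : ℕ))
        ?_ ?_ ?_ ?_ ?_).symm
      · intro j hj; exact hcmem j (Finset.mem_range.1 hj)
      · intro x hx; exact Finset.mem_range.2 (e.symm ⟨x, hx⟩).2
      · intro j hj
        have hjm := Finset.mem_range.1 hj
        show ((e.symm ⟨c j, _⟩ : Fin m) : ℕ) = j
        have : (⟨c j, hcmem j hjm⟩ : {x // x ∈ s}) = e ⟨j, hjm⟩ := Subtype.ext (hcval j hjm)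
        rw [this, OrderIso.symm_apply_apply]
      · intro x hx
        show c ((e.symm ⟨x, hx⟩ : Fin m) : ℕ) = x
        rw [hcval _ (e.symm ⟨x, hx⟩).2]
        rw [show (⟨((e.symm ⟨x, hx⟩ : Fin m) : ℕ), (e.symm ⟨x, hx⟩).2⟩ : Fin m)
          = e.symm ⟨x, hx⟩ from Fin.eta _ _]
        rw [OrderIso.apply_symm_apply]
      · intro x hx; rfl
    rw [h2]
    exact Finset.sum_congr rfl fun j hj => by rw [Finset.sum_const, nsmul_eq_mul]
  -- partial counting identity
  have hpartial : ∀ (g : Fin n → ℝ), (∀ i, g i ∈ s) → ∀ (k : ℕ), k < m →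
      ∑ j ∈ range (k + 1), ((univ.filter (fun i => g i = c j)).card : ℕ)
        = (univ.filter (fun i => g i ≤ c k)).card := by
    intro g hg k hk
    set t : Finset ℝ := (range (k + 1)).image c with ht
    have hmaps : ∀ i ∈ univ.filter (fun i => g i ≤ c k), g i ∈ t := by
      intro i hi
      have hle : g i ≤ c k := (Finset.mem_filter.1 hi).2
      obtain ⟨j0, hj0⟩ := hsurj (g i) (hg i)
      have hj0k : (j0 : ℕ) ≤ k := by
        by_contra hgt
        push_neg at hgt
        have := hclt hgt j0.2
        rw [hcval _ j0.2, hj0] at this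
        exact absurd hle (not_le.2 this)
      exact Finset.mem_image.2 ⟨j0, Finset.mem_range.2 (Nat.lt_succ_of_le hj0k),
        by rw [hcval _ j0.2, hj0]⟩
    have h1 := Finset.card_eq_sum_card_fiberwise hmaps
    have hcinj : ∀ x ∈ range (k + 1), ∀ y ∈ range (k + 1), c x = c y → x = y := by
      intro x hx y hy hxy
      have hxm : x < m := lt_of_lt_of_le (Finset.mem_range.1 hx) (Nat.succ_le_of_lt hk)
      have hym : y < m := lt_of_lt_of_le (Finset.mem_range.1 hy) (Nat.succ_le_of_lt hk)
      by_contra hne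
      rcases Nat.lt_or_ge x y with h | h
      · exact absurd hxy (ne_of_lt (hclt h hym))
      · rcases Nat.lt_or_ge y x with h2 | h2
        · exact absurd hxy.symm (ne_of_lt (hclt h2 hxm))
        · omega
    rw [h1, Finset.sum_image hcinj]
    refine (Finset.sum_congr rfl fun j hj => ?_).symm
    have hjk : j ≤ k := Nat.lt_succ_iff.1 (Finset.mem_range.1 hj)
    congr 1
    ext i
    simp only [Finset.mem_filter, Finset.mem_univ, true_and, and_iff_right_iff_imp]
    intro hgi
    rw [hgi]
    exact hcle hjk hk
  -- full counting
  have hfull : ∀ (g : Fin n → ℝ), (∀ i, g i ∈ s) →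
      ∑ j ∈ range m, ((univ.filter (fun i => g i = c j)).card : ℕ) = n := by
    intro g hg
    have hmm : m - 1 < m := Nat.sub_lt hm1 one_pos
    have h1 := hpartial g hg (m - 1) hmm
    have h2 : (univ.filter (fun i => g i ≤ c (m - 1))) = univ := by
      refine Finset.eq_univ_of_forall fun i => Finset.mem_filter.2 ⟨Finset.mem_univ _, ?_⟩
      obtain ⟨j0, hj0⟩ := hsurj (g i) (hg i)
      rw [← hj0, ← hcval _ j0.2]
      exact hcle (Nat.le_sub_one_of_lt j0.2) hmm
    rw [show m - 1 + 1 = m from Nat.succ_pred_eq_of_pos hm1] at h1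
    rw [h1, h2, Finset.card_univ, Fintype.card_fin]
  have hga : ∀ i, a i ∈ s := fun i =>
    Finset.mem_union_left _ (Finset.mem_image_of_mem a (mem_univ i))
  have hgb : ∀ i, b i ∈ s := fun i =>
    Finset.mem_union_right _ (Finset.mem_image_of_mem b (mem_univ i))
  set cA : ℕ → ℕ := fun j => (univ.filter (fun i => a i = c j)).card with hcA
  set cB : ℕ → ℕ := fun j => (univ.filter (fun i => b i = c j)).card with hcB
  set gd : ℕ → ℝ := fun j => (cA j : ℝ) - (cB j : ℝ) with hgd
  have hdiff : ∑ i, φ (a i) - ∑ i, φ (b i) = ∑ j ∈ range m, (fun j => φ (c j)) j • gd j := by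
    rw [hgroup a hga, hgroup b hgb, ← Finset.sum_sub_distrib]
    refine Finset.sum_congr rfl fun j hj => ?_
    simp only [hgd, smul_eq_mul]
    ring
  rw [hdiff, Finset.sum_range_by_parts (fun j => φ (c j)) gd m]
  have hzero : ∑ j ∈ range m, gd j = 0 := by
    rw [Finset.sum_sub_distrib]
    have hA' : ∑ j ∈ range m, (cA j : ℝ) = (n : ℝ) := by
      rw [← Nat.cast_sum]; exact_mod_cast hfull a hga
    have hB' : ∑ j ∈ range m, (cB j : ℝ) = (n : ℝ) := by
      rw [← Nat.cast_sum]; exact_mod_cast hfull b hgb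
    rw [hA', hB', sub_self]
  have hGbound : ∀ i ∈ range (m - 1), |∑ j ∈ range (i + 1), gd j| ≤ (r : ℝ) := by
    intro i hi
    have him : i < m := lt_of_lt_of_le (Finset.mem_range.1 hi) (Nat.sub_le m 1)
    have h1 : ∑ j ∈ range (i + 1), gd j =
        ((univ.filter (fun k => a k ≤ c i)).card : ℝ) -
          ((univ.filter (fun k => b k ≤ c i)).card : ℝ) := by
      rw [Finset.sum_sub_distrib, ← Nat.cast_sum, ← Nat.cast_sum,
        hpartial a hga i him, hpartial b hgb i him]
    rw [h1]
    exact hc (c i)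
  have hmeq : m - 1 + 1 = m := Nat.succ_pred_eq_of_pos hm1
  have hTV : ∑ i ∈ range (m - 1), |φ (c (i + 1)) - φ (c i)| ≤ 1 := by
    have hmono : StrictMono (fun j : Fin (m - 1 + 1) => c (j : ℕ)) := by
      intro j k hjk
      exact hclt (by exact_mod_cast hjk) (by have := k.isLt; omega)
    have h := hφ (m - 1) (fun j => c (j : ℕ)) hmono
    rw [← Fin.sum_univ_eq_sum_range (fun i => |φ (c (i + 1)) - φ (c i)|) (m - 1)]
    exact h
  rw [hzero, smul_zero, zero_sub, abs_neg]
  calc |∑ i ∈ range (m - 1), (φ (c (i + 1)) - φ (c i)) • (∑ j ∈ range (i + 1), gd j)|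
      ≤ ∑ i ∈ range (m - 1), |(φ (c (i + 1)) - φ (c i)) * (∑ j ∈ range (i + 1), gd j)| := by
        simpa [smul_eq_mul] using Finset.abs_sum_le_sum_abs
          (fun i => (φ (c (i + 1)) - φ (c i)) * (∑ j ∈ range (i + 1), gd j)) (range (m - 1))
    _ ≤ ∑ i ∈ range (m - 1), |φ (c (i + 1)) - φ (c i)| * r := by
        refine Finset.sum_le_sum fun i hi => ?_
        rw [abs_mul]
        exact mul_le_mul_of_nonneg_left (hGbound i hi) (abs_nonneg _)
    _ = (∑ i ∈ range (m - 1), |φ (c (i + 1)) - φ (c i)|) * r := by rw [Finset.sum_mul]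
    _ ≤ 1 * r := mul_le_mul_of_nonneg_right hTV (by positivity)
    _ = r := one_mul _

theorem bv_rank_inequality {n : ℕ} (A B : Matrix (Fin n) (Fin n) ℂ)
    (hA : A.IsHermitian) (hB : B.IsHermitian) (f : ℝ → ℝ)
    (hf : ∀ (m : ℕ) (t : Fin (m + 1) → ℝ), StrictMono t →
      ∑ i : Fin m, |f (t i.succ) - f (t i.castSucc)| ≤ 1) :
    |(1 / (n : ℝ)) * ∑ i, f (hA.eigenvalues i) -
        (1 / (n : ℝ)) * ∑ i, f (hB.eigenvalues i)| ≤ ((A - B).rank : ℝ) / n := by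
  classical
  set r := (A - B).rank with hr
  have hCsub : ∀ v : EuclideanSpace ℂ (Fin n), Matrix.toEuclideanLin (A - B) v = 0 →
      Matrix.toEuclideanLin A v = Matrix.toEuclideanLin B v := by
    intro v hv
    have h : Matrix.toEuclideanLin (A - B) v
        = Matrix.toEuclideanLin A v - Matrix.toEuclideanLin B v := by
      rw [map_sub]; rfl
    rw [h] at hv
    exact sub_eq_zero.1 hv
  have h1 := fun t => aux_counting A B (A - B) hA hB hCsub t
  have h2 := fun t => aux_counting B A (A - B) hB hA (fun v hv => (hCsub v hv).symm) t
  have hc : ∀ t : ℝ, |((univ.filter (fun i => hA.eigenvalues i ≤ t)).card : ℝ) -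
      ((univ.filter (fun i => hB.eigenvalues i ≤ t)).card : ℝ)| ≤ r := by
    intro t
    rw [abs_sub_le_iff]
    constructor
    · rw [sub_le_iff_le_add, ← Nat.cast_add]
      have := h1 t; exact_mod_cast by omega
    · rw [sub_le_iff_le_add, ← Nat.cast_add]
      have := h2 t; exact_mod_cast by omega
  have habs := aux_abel hA.eigenvalues hB.eigenvalues r f hf hc
  rw [← mul_sub, abs_mul, abs_of_nonneg (by positivity : (0:ℝ) ≤ 1 / (n:ℝ))]
  calc (1 / (n:ℝ)) * |∑ i, f (hA.eigenvalues i) - ∑ i, f (hB.eigenvalues i)|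
      ≤ (1 / (n:ℝ)) * r := mul_le_mul_of_nonneg_left habs (by positivity)
    _ = (r : ℝ) / n := by ring
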